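/- Let Ψ₁, Ψ₂: 𝔻 → ℂ^{n×n} be holomorphic matrix-valued functions, each contraction-valued on 𝔻 (operator norm ≤ 1), and suppose Ψ₁(w)Ψ₂(w) = I for all w ∈ 𝔻. Then Ψ₁ and Ψ₂ are both constant and equal to unitary matrices. -/

import Mathlib

open scoped Matrix.Norms.L2Operator

open Metric Matrix
open scoped InnerProductSpace

lemma col_sum_sq_le {n : ℕ} (M : Matrix (Fin n) (Fin n) ℂ) (j : Fin n) :
    ∑ i, ‖M i j‖ ^ 2 ≤ ‖M‖ ^ 2 := by
  have h := M.l2_opNorm_mulVec (EuclideanSpace.single j (1 : ℂ))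
  rw [EuclideanSpace.norm_single, norm_one, mul_one] at h
  have hcol : ∀ i, (M *ᵥ (EuclideanSpace.single j (1 : ℂ) : EuclideanSpace ℂ (Fin n))) i
      = M i j := by
    intro i
    simp [Matrix.mulVec, dotProduct, EuclideanSpace.single_apply]
  have hn : ‖(EuclideanSpace.equiv (Fin n) ℂ).symm
      (M *ᵥ (EuclideanSpace.single j (1 : ℂ) : EuclideanSpace ℂ (Fin n)))‖
      = Real.sqrt (∑ i, ‖M i j‖ ^ 2) := by
    rw [EuclideanSpace.norm_eq]
    congr 1
    refine Finset.sum_congr rfl fun i _ => ?_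
    rw [show ((EuclideanSpace.equiv (Fin n) ℂ).symm
      (M *ᵥ (EuclideanSpace.single j (1 : ℂ) : EuclideanSpace ℂ (Fin n)))) i
      = (M *ᵥ (EuclideanSpace.single j (1 : ℂ) : EuclideanSpace ℂ (Fin n))) i from rfl, hcol]
  rw [hn] at h
  have := pow_le_pow_left₀ (Real.sqrt_nonneg _) h 2
  rwa [Real.sq_sqrt (Finset.sum_nonneg fun i _ => by positivity)] at this

lemma entry_norm_le {n : ℕ} (M : Matrix (Fin n) (Fin n) ℂ) (i j : Fin n) :
    ‖M i j‖ ≤ ‖M‖ := by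
  have h1 : ‖M i j‖ ^ 2 ≤ ∑ k, ‖M k j‖ ^ 2 :=
    Finset.single_le_sum (f := fun k => ‖M k j‖ ^ 2) (fun k _ => by positivity)
      (Finset.mem_univ i)
  have := h1.trans (col_sum_sq_le M j)
  exact le_of_pow_le_pow_left₀ two_ne_zero (norm_nonneg M) this

noncomputable def entryCLM {n : ℕ} (i j : Fin n) : Matrix (Fin n) (Fin n) ℂ →L[ℂ] ℂ :=
  LinearMap.mkContinuous
    { toFun := fun M => M i j
      map_add' := fun _ _ => rfl
      map_smul' := fun _ _ => rfl }
    1 (fun M => by rw [one_mul]; exact entry_norm_le M i j)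

/-- A contraction with a diagonal entry equal to 1 has zero off-diagonal entries in that column. -/
lemma offdiag_zero_of_contraction {n : ℕ} {M : Matrix (Fin n) (Fin n) ℂ}
    (hM : ‖M‖ ≤ 1) {i j : Fin n} (hd : M j j = 1) (hij : i ≠ j) : M i j = 0 := by
  have hsum : ∑ k, ‖M k j‖ ^ 2 ≤ 1 := by
    have := col_sum_sq_le M j
    nlinarith [norm_nonneg M]
  have hdd : ‖M j j‖ ^ 2 = 1 := by rw [hd]; norm_num
  have herase : ∑ k ∈ Finset.univ.erase j, ‖M k j‖ ^ 2 ≤ 0 := by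
    rw [← Finset.add_sum_erase _ _ (Finset.mem_univ j), hdd] at hsum
    linarith
  have hz : ∀ k ∈ Finset.univ.erase j, ‖M k j‖ ^ 2 = 0 := by
    intro k hk
    have := Finset.sum_nonneg (fun k (_ : k ∈ Finset.univ.erase j) =>
      (by positivity : (0:ℝ) ≤ ‖M k j‖ ^ 2))
    have heq : ∑ k ∈ Finset.univ.erase j, ‖M k j‖ ^ 2 = 0 := le_antisymm herase this
    exact (Finset.sum_eq_zero_iff_of_nonneg (fun k _ => by positivity)).mp heq k hk
  have := hz i (Finset.mem_erase.mpr ⟨hij, Finset.mem_univ i⟩)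
  have : ‖M i j‖ = 0 := by nlinarith [norm_nonneg (M i j)]
  simpa using this

theorem inverse_pair_of_contractive_holomorphic_is_constant_unitary
    {n : ℕ} (Ψ₁ Ψ₂ : ℂ → Matrix (Fin n) (Fin n) ℂ)
    (h₁ : DifferentiableOn ℂ Ψ₁ (Metric.ball 0 1))
    (h₂ : DifferentiableOn ℂ Ψ₂ (Metric.ball 0 1))
    (hc₁ : ∀ w ∈ Metric.ball (0 : ℂ) 1, ‖Ψ₁ w‖ ≤ 1)
    (hc₂ : ∀ w ∈ Metric.ball (0 : ℂ) 1, ‖Ψ₂ w‖ ≤ 1)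
    (hinv : ∀ w ∈ Metric.ball (0 : ℂ) 1, Ψ₁ w * Ψ₂ w = 1) :
    ∃ U₁ ∈ Matrix.unitaryGroup (Fin n) ℂ, ∃ U₂ ∈ Matrix.unitaryGroup (Fin n) ℂ,
      (∀ w ∈ Metric.ball (0 : ℂ) 1, Ψ₁ w = U₁) ∧
      (∀ w ∈ Metric.ball (0 : ℂ) 1, Ψ₂ w = U₂) := by
  have h0 : (0 : ℂ) ∈ Metric.ball (0 : ℂ) 1 := by simp
  set U := Ψ₁ 0 with hU
  set V := Ψ₂ 0 with hV
  have hUV : U * V = 1 := hinv 0 h0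
  have hVU : V * U = 1 := mul_eq_one_comm.mp hUV
  have hVnorm : ‖V‖ ≤ 1 := hc₂ 0 h0
  have hUnorm : ‖U‖ ≤ 1 := hc₁ 0 h0
  -- the function F w = V * Ψ₁ w is a contraction with F 0 = 1
  set F : ℂ → Matrix (Fin n) (Fin n) ℂ := fun w => V * Ψ₁ w with hF
  have hF0 : F 0 = 1 := hVU
  have hFnorm : ∀ w ∈ Metric.ball (0 : ℂ) 1, ‖F w‖ ≤ 1 := by
    intro w hw
    calc ‖V * Ψ₁ w‖ ≤ ‖V‖ * ‖Ψ₁ w‖ := Matrix.l2_opNorm_mul V (Ψ₁ w)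
      _ ≤ 1 * 1 := mul_le_mul hVnorm (hc₁ w hw) (norm_nonneg _) zero_le_one
      _ = 1 := by norm_num
  have hFdiff : DifferentiableOn ℂ F (Metric.ball 0 1) :=
    (differentiableOn_const V).mul h₁
  -- each diagonal entry of F is constantly 1 by the maximum modulus principle
  have hdiag : ∀ j : Fin n, ∀ w ∈ Metric.ball (0 : ℂ) 1, F w j j = 1 := by
    intro j
    set g : ℂ → ℂ := fun w => entryCLM j j (F w) with hg
    have hgdiff : DifferentiableOn ℂ g (Metric.ball 0 1) :=
      (entryCLM j j).differentiable.comp_differentiableOn hFdiff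
    have hg0 : g 0 = 1 := by
      simp only [hg, hF0]
      show (1 : Matrix (Fin n) (Fin n) ℂ) j j = 1
      simp
    have hmax : IsMaxOn (norm ∘ g) (Metric.ball (0:ℂ) 1) 0 := by
      intro x hx
      show ‖g x‖ ≤ ‖g 0‖
      rw [hg0, norm_one]
      exact (entry_norm_le (F x) j j).trans (hFnorm x hx)
    have := Complex.eqOn_of_isPreconnected_of_isMaxOn_norm
      (convex_ball (0:ℂ) 1).isPreconnected isOpen_ball hgdiff h0 hmax
    intro w hw
    have hgw : g w = g 0 := this hw
    rw [hg0] at hgw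
    exact hgw
  -- hence F w = 1 everywhere on the ball
  have hFone : ∀ w ∈ Metric.ball (0 : ℂ) 1, F w = 1 := by
    intro w hw
    ext i j
    by_cases hij : i = j
    · subst hij; rw [hdiag i w hw]; simp
    · rw [offdiag_zero_of_contraction (hFnorm w hw) (hdiag j w hw) hij]
      simp [Matrix.one_apply, hij]
  -- therefore Ψ₁ and Ψ₂ are constant
  have hΨ₁const : ∀ w ∈ Metric.ball (0 : ℂ) 1, Ψ₁ w = U := by
    intro w hw
    calc Ψ₁ w = (U * V) * Ψ₁ w := by rw [hUV, one_mul]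
      _ = U * (V * Ψ₁ w) := by rw [mul_assoc]
      _ = U * 1 := by rw [show V * Ψ₁ w = 1 from hFone w hw]
      _ = U := mul_one U
  have hΨ₂const : ∀ w ∈ Metric.ball (0 : ℂ) 1, Ψ₂ w = V := by
    intro w hw
    have h1 : U * Ψ₂ w = 1 := by rw [← hΨ₁const w hw]; exact hinv w hw
    calc Ψ₂ w = (V * U) * Ψ₂ w := by rw [hVU, one_mul]
      _ = V * (U * Ψ₂ w) := by rw [mul_assoc]
      _ = V := by rw [h1, mul_one]
  -- U is unitary
  have hUunitary : U ∈ Matrix.unitaryGroup (Fin n) ℂ := by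
    rw [Matrix.mem_unitaryGroup_iff']
    set T := Matrix.toEuclideanCLM (n := Fin n) (𝕜 := ℂ) U with hT
    set S := Matrix.toEuclideanCLM (n := Fin n) (𝕜 := ℂ) V with hS
    have hTnorm : ‖T‖ ≤ 1 := hUnorm
    have hSnorm : ‖S‖ ≤ 1 := hVnorm
    have hST : S * T = 1 := by
      rw [hS, hT, ← _root_.map_mul, hVU, _root_.map_one]
    have hiso : ∀ x : EuclideanSpace ℂ (Fin n), ‖T x‖ = ‖x‖ := by
      intro x
      refine le_antisymm ((T.le_opNorm x).trans (by nlinarith [norm_nonneg x])) ?_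
      calc ‖x‖ = ‖(S * T) x‖ := by rw [hST]; simp
        _ = ‖S (T x)‖ := rfl
        _ ≤ ‖S‖ * ‖T x‖ := S.le_opNorm _
        _ ≤ 1 * ‖T x‖ := mul_le_mul_of_nonneg_right hSnorm (norm_nonneg _)
        _ = ‖T x‖ := one_mul _
    have hTT : star T * T = 1 := by
      have key : ∀ x : EuclideanSpace ℂ (Fin n), ⟪(star T * T) x, x⟫_ℂ = ⟪x, x⟫_ℂ := by
        intro x
        have hax : (star T * T) x = (ContinuousLinearMap.adjoint T) (T x) := by
          rw [ContinuousLinearMap.star_eq_adjoint]; rfl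
        rw [hax, ContinuousLinearMap.adjoint_inner_left]
        rw [inner_self_eq_norm_sq_to_K, inner_self_eq_norm_sq_to_K, hiso]
      have h2 : ((star T * T - 1 : _ →L[ℂ] _) :
          EuclideanSpace ℂ (Fin n) →ₗ[ℂ] EuclideanSpace ℂ (Fin n)) = 0 := by
        rw [← inner_map_self_eq_zero]
        intro x
        simp only [ContinuousLinearMap.coe_coe, ContinuousLinearMap.sub_apply,
          ContinuousLinearMap.one_apply]
        rw [inner_sub_left, key x, sub_self]
      have h3 : (star T * T - 1 : _ →L[ℂ] _) = 0 :=
        ContinuousLinearMap.coe_injective h2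
      exact sub_eq_zero.mp h3
    have : Matrix.toEuclideanCLM (n := Fin n) (𝕜 := ℂ) (star U * U) = 1 := by
      rw [_root_.map_mul, map_star, ← hT, hTT]
    have h1 : Matrix.toEuclideanCLM (n := Fin n) (𝕜 := ℂ) (star U * U)
        = Matrix.toEuclideanCLM (n := Fin n) (𝕜 := ℂ) 1 := by rw [this, _root_.map_one]
    exact (Matrix.toEuclideanCLM (n := Fin n) (𝕜 := ℂ)).injective h1
  have hVeq : V = star U := by
    calc V = (star U * U) * V := by
          rw [(Matrix.mem_unitaryGroup_iff').mp hUunitary, one_mul]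
      _ = star U * (U * V) := by rw [mul_assoc]
      _ = star U := by rw [hUV, mul_one]
  have hVunitary : V ∈ Matrix.unitaryGroup (Fin n) ℂ := by
    rw [hVeq]; exact Unitary.star_mem hUunitary
  exact ⟨U, hUunitary, V, hVunitary, hΨ₁const, hΨ₂const⟩
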